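/- arXiv:2203.07149 — 3 statements merged into one kernel-verified Lean document; each statement's English description precedes it below -/
import Mathlib

section
/- For real numbers α, β ≥ 0 and an integer d ≥ 1, let □_d(α,β) = {(x_1,…,x_d) ∈ ℝ_{≥0}^d : for all 1 ≤ j ≤ d, x_j + x_{j+1} + … + x_d ≤ α + (d−j)β}. Then d! · vol(□_d(α,β)) = α(α + dβ)^{d−1}, where vol denotes the d-dimensional Lebesgue measure. -/
open MeasureTheory Finset

def Sbox (d : ℕ) (α β : ℝ) : Set (Fin d → ℝ) :=
  {x : Fin d → ℝ | (∀ i, 0 ≤ x i) ∧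
    ∀ j : Fin d, ∑ i ∈ Finset.univ.filter (fun i => j ≤ i), x i
      ≤ α + ((d - 1 - (j : ℕ) : ℕ) : ℝ) * β}

lemma measurableSet_sbox (d : ℕ) (α β : ℝ) : MeasurableSet (Sbox d α β) := by
  have h : Sbox d α β = (⋂ i, {x : Fin d → ℝ | 0 ≤ x i}) ∩
      ⋂ j : Fin d, {x : Fin d → ℝ | ∑ i ∈ Finset.univ.filter (fun i => j ≤ i), x i
        ≤ α + ((d - 1 - (j : ℕ) : ℕ) : ℝ) * β} := by
    ext x; simp [Sbox, Set.mem_iInter]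
  rw [h]
  refine MeasurableSet.inter (MeasurableSet.iInter fun i => ?_)
    (MeasurableSet.iInter fun j => ?_)
  · exact measurableSet_le measurable_const (measurable_pi_apply i)
  · exact measurableSet_le (Finset.measurable_sum _ fun i _ => measurable_pi_apply i)
      measurable_const

lemma filter_castSucc (d : ℕ) (j : Fin d) :
    (Finset.univ.filter (fun i : Fin (d+1) => j.castSucc ≤ i)) =
      insert (Fin.last d)
        ((Finset.univ.filter (fun i : Fin d => j ≤ i)).image Fin.castSucc) := by
  ext i
  refine Fin.lastCases ?_ (fun k => ?_) i <;>
    simp [Fin.le_last, Fin.castSucc_le_castSucc_iff, Fin.castSucc_lt_last,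
      (Fin.castSucc_lt_last _).ne, eq_comm]

lemma sum_filter_castSucc (d : ℕ) (j : Fin d) (x : Fin (d+1) → ℝ) :
    ∑ i ∈ Finset.univ.filter (fun i : Fin (d+1) => j.castSucc ≤ i), x i
      = x (Fin.last d) +
        ∑ i ∈ Finset.univ.filter (fun i : Fin d => j ≤ i), x i.castSucc := by
  rw [filter_castSucc, Finset.sum_insert, Finset.sum_image]
  · intro a _ b _ h; exact Fin.castSucc_injective _ h
  · simp only [Finset.mem_image, Finset.mem_filter, not_exists]
    rintro a ⟨-, ha⟩
    exact (Fin.castSucc_lt_last a).ne ha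

lemma filter_last (d : ℕ) :
    (Finset.univ.filter (fun i : Fin (d+1) => Fin.last d ≤ i)) = {Fin.last d} := by
  ext i
  simp only [Finset.mem_filter, Finset.mem_univ, true_and, Finset.mem_singleton]
  exact ⟨fun h => (le_antisymm (Fin.le_last i) h).symm ▸ rfl, fun h => h ▸ le_rfl⟩

lemma cast_sub_succ (d : ℕ) (k : Fin d) :
    ((d - (k : ℕ) : ℕ) : ℝ) = ((d - 1 - (k : ℕ) : ℕ) : ℝ) + 1 := by
  have h : d - (k : ℕ) = (d - 1 - (k : ℕ)) + 1 := by
    have := k.isLt; omega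
  rw [h]; push_cast; ring

lemma snoc_mem_sbox_iff (d : ℕ) (α β t : ℝ) (y : Fin d → ℝ) :
    Fin.snoc y t ∈ Sbox (d+1) α β ↔ (0 ≤ t ∧ t ≤ α) ∧ y ∈ Sbox d (α + β - t) β := by
  simp only [Sbox, Set.mem_setOf_eq]
  constructor
  · rintro ⟨h0, hs⟩
    have ht0 : 0 ≤ t := by simpa using h0 (Fin.last d)
    have htα : t ≤ α := by
      have := hs (Fin.last d)
      rw [filter_last, Finset.sum_singleton] at this
      simpa using this
    refine ⟨⟨ht0, htα⟩, fun i => by simpa using h0 i.castSucc, fun k => ?_⟩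
    have := hs k.castSucc
    rw [sum_filter_castSucc] at this
    simp only [Fin.snoc_last, Fin.snoc_castSucc, Fin.coe_castSucc,
      Nat.add_sub_cancel] at this
    rw [cast_sub_succ d k] at this
    linarith
  · rintro ⟨⟨ht0, htα⟩, hy0, hys⟩
    constructor
    · intro i
      refine Fin.lastCases ?_ (fun k => ?_) i
      · simpa using ht0
      · simpa using hy0 k
    · intro j
      refine Fin.lastCases ?_ (fun k => ?_) j
      · rw [filter_last, Finset.sum_singleton]
        simpa using htα
      · rw [sum_filter_castSucc]
        have := hys k
        simp only [Fin.snoc_last, Fin.snoc_castSucc, Fin.coe_castSucc,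
          Nat.add_sub_cancel]
        rw [cast_sub_succ d k]
        linarith

lemma vol_sbox_succ (d : ℕ) (α β : ℝ) :
    volume (Sbox (d+1) α β)
      = ∫⁻ t in Set.Icc 0 α, volume (Sbox d (α + β - t) β) := by
  set e : (Fin (d+1) → ℝ) ≃ᵐ ℝ × (Fin d → ℝ) :=
    MeasurableEquiv.piFinSuccAbove (fun _ => ℝ) (Fin.last d) with he
  have hmp := volume_preserving_piFinSuccAbove (fun _ : Fin (d+1) => ℝ) (Fin.last d)
  have hsymm : MeasurePreserving e.symm := MeasurePreserving.symm _ hmp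
  have hvol : volume (Sbox (d+1) α β)
      = (volume : Measure (ℝ × (Fin d → ℝ))) (e.symm ⁻¹' Sbox (d+1) α β) :=
    (hsymm.measure_preimage (measurableSet_sbox _ _ _).nullMeasurableSet).symm
  have hpre : e.symm ⁻¹' Sbox (d+1) α β
      = {p : ℝ × (Fin d → ℝ) | (0 ≤ p.1 ∧ p.1 ≤ α) ∧ p.2 ∈ Sbox d (α + β - p.1) β} := by
    ext ⟨t, y⟩
    have h1 : e.symm (t, y) = Fin.snoc y t := by
      show (Fin.insertNthEquiv (fun _ => ℝ) (Fin.last d)) (t, y) = _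
      simp [Fin.insertNth_last, Fin.snocEquiv]
    simp only [Set.mem_preimage, h1, Set.mem_setOf_eq]
    exact snoc_mem_sbox_iff d α β t y
  rw [hvol, hpre]
  have hms : MeasurableSet
      {p : ℝ × (Fin d → ℝ) | (0 ≤ p.1 ∧ p.1 ≤ α) ∧ p.2 ∈ Sbox d (α + β - p.1) β} := by
    rw [← hpre]
    exact e.symm.measurable (measurableSet_sbox _ _ _)
  rw [show (volume : Measure (ℝ × (Fin d → ℝ))) = Measure.prod volume volume from rfl,
    Measure.prod_apply hms]
  rw [← lintegral_indicator measurableSet_Icc]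
  congr 1
  ext t
  by_cases ht : t ∈ Set.Icc 0 α
  · have h0 := ht.1
    have h1 := ht.2
    rw [Set.indicator_of_mem ht]
    congr 1
    ext y
    simp [h0, h1]
  · rw [Set.indicator_of_notMem ht]
    have : (Prod.mk t ⁻¹' {p : ℝ × (Fin d → ℝ) |
        (0 ≤ p.1 ∧ p.1 ≤ α) ∧ p.2 ∈ Sbox d (α + β - p.1) β}) = ∅ := by
      ext y
      simp only [Set.mem_preimage, Set.mem_setOf_eq, Set.mem_empty_iff_false, iff_false]
      rintro ⟨⟨h0, h1⟩, -⟩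
      exact ht ⟨h0, h1⟩
    rw [this]
    simp

noncomputable def fbox : ℕ → ℝ → ℝ → ℝ
  | 0, _, _ => 1
  | (d+1), α, β => α * (α + ((d : ℝ) + 1) * β) ^ d / (d+1).factorial

lemma fbox_nonneg (d : ℕ) (α β : ℝ) (hα : 0 ≤ α) (hβ : 0 ≤ β) : 0 ≤ fbox d α β := by
  cases d with
  | zero => norm_num [fbox]
  | succ m =>
    have h : (0:ℝ) ≤ α + ((m : ℝ) + 1) * β := by positivity
    unfold fbox
    positivity

lemma continuous_fbox (d : ℕ) (β : ℝ) : Continuous (fun u => fbox d u β) := by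
  cases d with
  | zero => simpa [fbox] using continuous_const
  | succ m =>
    unfold fbox
    exact (continuous_id.mul ((continuous_id.add continuous_const).pow m)).div_const _

lemma integral_fbox (d : ℕ) (α β : ℝ) :
    ∫ t in (0:ℝ)..α, fbox d (α + β - t) β = fbox (d+1) α β := by
  rw [intervalIntegral.integral_comp_sub_left (fun u => fbox d u β) (α + β)]
  have hb : α + β - α = β := by ring
  have hb' : α + β - 0 = α + β := by ring
  rw [hb, hb']
  cases d with
  | zero =>
    simp [fbox]
  | succ m =>
    set c : ℝ := ((m : ℝ) + 1) * β with hc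
    have hpow : ∀ k : ℕ, ∫ u in β..(α+β), (u + c) ^ k
        = ((α + β + c) ^ (k+1) - (β + c) ^ (k+1)) / (k+1) := by
      intro k
      rw [intervalIntegral.integral_comp_add_right (fun v => v ^ k) c, integral_pow]
    have hint1 : IntervalIntegrable (fun u => (u + c) ^ (m+1)) volume β (α+β) := by
      apply Continuous.intervalIntegrable; continuity
    have hint2 : IntervalIntegrable (fun u => c * (u + c) ^ m) volume β (α+β) := by
      apply Continuous.intervalIntegrable; continuity
    have hfb : ∀ u : ℝ, fbox (m+1) u β = u * (u + c) ^ m / (m+1).factorial := by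
      intro u; simp [fbox, hc]
    have hsplit : ∫ u in β..(α+β), fbox (m+1) u β
        = (∫ u in β..(α+β), ((u + c) ^ (m+1) - c * (u + c) ^ m)) / (m+1).factorial := by
      rw [← intervalIntegral.integral_div]
      apply intervalIntegral.integral_congr
      intro u _
      simp only
      rw [hfb, pow_succ]
      ring
    have hA : α + β + c = α + ((m:ℝ) + 2) * β := by rw [hc]; ring
    have hB : β + c = ((m:ℝ) + 2) * β := by rw [hc]; ring
    have hfb2 : fbox (m+1+1) α β
        = α * (α + ((m:ℝ) + 2) * β) ^ (m+1) / (((m:ℝ) + 2) * (m+1).factorial) := by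
      simp only [fbox, Nat.factorial_succ (m+1)]
      push_cast; ring
    rw [hsplit, intervalIntegral.integral_sub hint1 hint2,
      intervalIntegral.integral_const_mul, hpow, hpow, hA, hB, hfb2,
      pow_succ (α + ((m:ℝ)+2)*β) (m+1), pow_succ (((m:ℝ)+2)*β) (m+1)]
    have hm1 : ((m:ℝ) + 1) ≠ 0 := by positivity
    have hm2 : ((m:ℝ) + 2) ≠ 0 := by positivity
    have hf : ((m+1).factorial : ℝ) ≠ 0 := by positivity
    generalize (α + ((m:ℝ)+2)*β) ^ (m+1) = X
    generalize (((m:ℝ)+2)*β) ^ (m+1) = Y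
    rw [hc]
    push_cast
    field_simp
    ring

lemma vol_sbox : ∀ (d : ℕ) (α β : ℝ), 0 ≤ α → 0 ≤ β →
    volume (Sbox d α β) = ENNReal.ofReal (fbox d α β) := by
  intro d
  induction d with
  | zero =>
    intro α β _ _
    have h : Sbox 0 α β = Set.univ := by
      ext x
      simp [Sbox]
    rw [h, fbox]
    rw [MeasureTheory.volume_pi, MeasureTheory.Measure.pi_univ]
    simp
  | succ m ih =>
    intro α β hα hβ
    rw [vol_sbox_succ]
    have h1 : ∀ᵐ t ∂(volume : Measure ℝ), t ∈ Set.Icc (0:ℝ) α →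
        volume (Sbox m (α + β - t) β) = ENNReal.ofReal (fbox m (α + β - t) β) := by
      refine ae_of_all _ fun t ht => ?_
      exact ih (α + β - t) β (by linarith [ht.1, ht.2]) hβ
    rw [setLIntegral_congr_fun measurableSet_Icc
      (fun t ht => ih (α + β - t) β (by linarith [ht.1, ht.2]) hβ)]
    have hcont : Continuous (fun t : ℝ => fbox m (α + β - t) β) :=
      (continuous_fbox m β).comp (continuous_const.sub continuous_id)
    have hint : IntegrableOn (fun t : ℝ => fbox m (α + β - t) β) (Set.Icc 0 α) volume :=
      hcont.integrableOn_Icc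
    have hnn : 0 ≤ᵐ[(volume : Measure ℝ).restrict (Set.Icc 0 α)]
        fun t : ℝ => fbox m (α + β - t) β := by
      refine (ae_restrict_iff' measurableSet_Icc).2 (ae_of_all _ fun t ht => ?_)
      exact fbox_nonneg m _ β (by linarith [ht.1, ht.2]) hβ
    rw [← ofReal_integral_eq_lintegral_ofReal hint hnn]
    congr 1
    rw [MeasureTheory.integral_Icc_eq_integral_Ioc,
      ← intervalIntegral.integral_of_le hα]
    exact integral_fbox m α β

theorem stmt_0 (d : ℕ) (hd : 1 ≤ d) (α β : ℝ) (hα : 0 ≤ α) (hβ : 0 ≤ β) :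
    (d.factorial : ℝ) *
      (volume {x : Fin d → ℝ | (∀ i, 0 ≤ x i) ∧
        ∀ j : Fin d, ∑ i ∈ Finset.univ.filter (fun i => j ≤ i), x i
          ≤ α + ((d - 1 - (j : ℕ) : ℕ) : ℝ) * β}).toReal
      = α * (α + d * β) ^ (d - 1) := by
  obtain ⟨m, rfl⟩ : ∃ m, d = m + 1 := ⟨d - 1, by omega⟩
  have hset : {x : Fin (m+1) → ℝ | (∀ i, 0 ≤ x i) ∧
      ∀ j : Fin (m+1), ∑ i ∈ Finset.univ.filter (fun i => j ≤ i), x i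
        ≤ α + ((m + 1 - 1 - (j : ℕ) : ℕ) : ℝ) * β} = Sbox (m+1) α β := rfl
  rw [hset, vol_sbox (m+1) α β hα hβ]
  have hnn : 0 ≤ fbox (m+1) α β := fbox_nonneg _ _ _ hα hβ
  rw [ENNReal.toReal_ofReal hnn]
  have hfb : fbox (m+1) α β = α * (α + ((m:ℝ) + 1) * β) ^ m / (m+1).factorial := by
    simp [fbox]
  rw [hfb]
  have hf : ((m+1).factorial : ℝ) ≠ 0 := by positivity
  have h1 : ((m + 1 : ℕ) : ℝ) = (m : ℝ) + 1 := by push_cast; ring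
  rw [show m + 1 - 1 = m from rfl, h1]
  field_simp
end

section
/- Let d ≥ 1 and let t_1 ≥ t_2 ≥ … ≥ t_d ≥ 0 be real numbers. Define □(t_1,…,t_d) = {(x_1,…,x_d) ∈ ℝ_{≥0}^d : x_j + x_{j+1} + … + x_d ≤ t_j for all 1 ≤ j ≤ d}. If θ ≥ t_i − t_{i+1} for all 1 ≤ i ≤ d−1, then □(t_1,…,t_d) ⊆ □_d(t_d, θ) where □_d(α,β) = {x ∈ ℝ_{≥0}^d : ∑_{i=j}^d x_i ≤ α + (d−j)β for all j}. Consequently vol(□(t_1,…,t_d)) ≤ (1/d!)·t_d·(t_d + dθ)^{d−1}. -/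
open MeasureTheory Finset

def box (n : ℕ) (c : ℕ → ℝ) : Set (Fin n → ℝ) :=
  {x | (∀ i, 0 ≤ x i) ∧
    ∀ j : Fin n, ∑ i ∈ Finset.univ.filter (fun i => j ≤ i), x i ≤ c ((j : ℕ) + 1)}

lemma box_measurableSet (n : ℕ) (c : ℕ → ℝ) : MeasurableSet (box n c) := by
  have h1 : MeasurableSet {x : Fin n → ℝ | ∀ i, 0 ≤ x i} := by
    rw [Set.setOf_forall]
    exact MeasurableSet.iInter fun i => measurableSet_le measurable_const (measurable_pi_apply i)
  have h2 : MeasurableSet {x : Fin n → ℝ |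
      ∀ j : Fin n, ∑ i ∈ Finset.univ.filter (fun i => j ≤ i), x i ≤ c ((j : ℕ) + 1)} := by
    rw [Set.setOf_forall]
    exact MeasurableSet.iInter fun j => measurableSet_le
      (Finset.measurable_sum _ fun i _ => measurable_pi_apply i) measurable_const
  exact (h1.inter h2 : _)

lemma box_zero (c : ℕ → ℝ) : box 0 c = Set.univ :=
  Set.eq_univ_of_forall fun x => ⟨fun i => i.elim0, fun j => j.elim0⟩

lemma sum_snoc_last (n : ℕ) (y : Fin n → ℝ) (s : ℝ) :
    ∑ i ∈ Finset.univ.filter (fun i : Fin (n+1) => Fin.last n ≤ i), Fin.snoc y s i = s := by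
  have : (Finset.univ.filter (fun i : Fin (n+1) => Fin.last n ≤ i)) = {Fin.last n} := by
    ext i; simp [Fin.last_le_iff]
  rw [this, Finset.sum_singleton, Fin.snoc_last]

lemma sum_snoc_castSucc (n : ℕ) (y : Fin n → ℝ) (s : ℝ) (j : Fin n) :
    ∑ i ∈ Finset.univ.filter (fun i : Fin (n+1) => j.castSucc ≤ i), Fin.snoc y s i
      = (∑ i ∈ Finset.univ.filter (fun i : Fin n => j ≤ i), y i) + s := by
  rw [Finset.sum_filter, Finset.sum_filter, Fin.sum_univ_castSucc]
  simp [Fin.castSucc_le_castSucc_iff, Fin.le_last]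

lemma mem_box_snoc (n : ℕ) (c : ℕ → ℝ) (y : Fin n → ℝ) (s : ℝ) :
    Fin.snoc y s ∈ box (n+1) c ↔
      (s ∈ Set.Icc 0 (c (n+1)) ∧ y ∈ box n (fun k => c k - s)) := by
  constructor
  · rintro ⟨h0, hc⟩
    have hs0 : 0 ≤ s := by have := h0 (Fin.last n); rwa [Fin.snoc_last] at this
    have hsT : s ≤ c (n+1) := by
      have := hc (Fin.last n); rwa [sum_snoc_last, Fin.val_last] at this
    refine ⟨⟨hs0, hsT⟩, fun i => ?_, fun j => ?_⟩
    · have := h0 i.castSucc; rwa [Fin.snoc_castSucc] at this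
    · have := hc j.castSucc
      rw [sum_snoc_castSucc, Fin.coe_castSucc] at this
      simp only []
      linarith
  · rintro ⟨⟨hs0, hsT⟩, hy0, hyc⟩
    refine ⟨fun i => ?_, fun j => ?_⟩
    · induction i using Fin.lastCases with
      | last => rwa [Fin.snoc_last]
      | cast i => rw [Fin.snoc_castSucc]; exact hy0 i
    · induction j using Fin.lastCases with
      | last => rw [sum_snoc_last, Fin.val_last]; exact hsT
      | cast j =>
        rw [sum_snoc_castSucc, Fin.coe_castSucc]
        have := hyc j
        simp only [] at this
        linarith

lemma box_slice (n : ℕ) (c : ℕ → ℝ) :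
    volume (box (n+1) c)
      = ∫⁻ s in Set.Icc 0 (c (n+1)), volume (box n (fun k => c k - s)) := by
  have hmeas := box_measurableSet (n+1) c
  set e := MeasurableEquiv.piFinSuccAbove (fun _ : Fin (n+1) => ℝ) (Fin.last n) with he
  have hpres : MeasurePreserving e.symm :=
    (volume_preserving_piFinSuccAbove (fun _ : Fin (n+1) => ℝ) (Fin.last n)).symm
  have h1 : volume (box (n+1) c) = volume (e.symm ⁻¹' box (n+1) c) :=
    (hpres.measure_preimage hmeas.nullMeasurableSet).symm
  have hA : MeasurableSet (e.symm ⁻¹' box (n+1) c) := e.symm.measurable hmeas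
  rw [h1, Measure.volume_eq_prod, Measure.prod_apply hA]
  have hslice : ∀ s : ℝ, volume (Prod.mk s ⁻¹' (e.symm ⁻¹' box (n+1) c))
      = Set.indicator (Set.Icc 0 (c (n+1)))
          (fun s => volume (box n (fun k => c k - s))) s := by
    intro s
    have hset : Prod.mk s ⁻¹' (e.symm ⁻¹' box (n+1) c)
        = {y : Fin n → ℝ | Fin.snoc y s ∈ box (n+1) c} := by
      ext y
      simp only [he, MeasurableEquiv.piFinSuccAbove_symm_apply, Set.mem_preimage,
        Set.mem_setOf_eq, Fin.insertNthEquiv_last]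
      exact Iff.rfl
    rw [hset]
    by_cases hs : s ∈ Set.Icc 0 (c (n+1))
    · rw [Set.indicator_of_mem hs]
      congr 1
      ext y
      simp [mem_box_snoc, hs]
    · rw [Set.indicator_of_notMem hs]
      have : {y : Fin n → ℝ | Fin.snoc y s ∈ box (n+1) c} = ∅ := by
        ext y; simp [mem_box_snoc, hs]
      rw [this, measure_empty]
  rw [lintegral_congr hslice, lintegral_indicator measurableSet_Icc]

lemma integral_step (T θ : ℝ) (k : ℕ) :
    ∫ s in (0:ℝ)..T, (T + θ - s) * ((T + ((k:ℝ)+2)*θ) - s)^k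
      = T * (T + ((k:ℝ)+2)*θ)^(k+1) / ((k:ℝ)+2) := by
  set B : ℝ := T + ((k:ℝ)+2)*θ with hB
  have h1 : ∀ s : ℝ, (T + θ - s) * (B - s)^k
      = (fun u : ℝ => u^(k+1) - (((k:ℝ)+1)*θ) * u^k) (B - s) := by
    intro s; simp only [hB]; ring
  rw [intervalIntegral.integral_congr (g := fun s => (fun u : ℝ => u^(k+1) - (((k:ℝ)+1)*θ) * u^k) (B - s)) (fun s _ => h1 s)]
  rw [intervalIntegral.integral_comp_sub_left (fun u : ℝ => u^(k+1) - (((k:ℝ)+1)*θ) * u^k) B]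
  rw [intervalIntegral.integral_sub (intervalIntegral.intervalIntegrable_pow _)
    ((intervalIntegral.intervalIntegrable_pow _).const_mul _)]
  rw [integral_pow, intervalIntegral.integral_const_mul,
    integral_pow]
  have h2 : B - T = ((k:ℝ)+2)*θ := by rw [hB]; ring
  rw [h2, sub_zero]
  have hk1 : ((k:ℝ)+1) ≠ 0 := by positivity
  have hk2 : ((k:ℝ)+2) ≠ 0 := by positivity
  have hkk : ((k:ℝ)+1+1) = ((k:ℝ)+2) := by ring
  push_cast
  rw [hkk]
  field_simp
  ring

lemma key (θ : ℝ) : ∀ n : ℕ, 1 ≤ n → ∀ c : ℕ → ℝ,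
    (∀ i, 1 ≤ i → i < n → c (i+1) ≤ c i) → 0 ≤ c n →
    (∀ i, 1 ≤ i → i < n → c i - c (i+1) ≤ θ) →
    volume (box n c) ≤ ENNReal.ofReal (c n * (c n + (n:ℝ)*θ)^(n-1) / n.factorial) := by
  intro n
  induction n with
  | zero => omega
  | succ m ih =>
    intro _ c hdec hnn hθ
    rw [box_slice m c]
    match m, ih, hdec, hnn, hθ with
    | 0, _, hdec, hnn, hθ =>
      simp only [box_zero]
      have huniv : volume (Set.univ : Set (Fin 0 → ℝ)) = 1 := by
        rw [Measure.volume_pi_eq_dirac isEmptyElim]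
        exact measure_univ
      rw [huniv, setLIntegral_one, Real.volume_Icc]
      apply ENNReal.ofReal_le_ofReal
      simp [Nat.factorial]
    | (k+1), ih, hdec, hnn, hθ =>
      have hT : (0:ℝ) ≤ c (k+2) := hnn
      have hd1 : c (k+2) ≤ c (k+1) := hdec (k+1) (by omega) (by omega)
      have hθ1 : c (k+1) - c (k+2) ≤ θ := hθ (k+1) (by omega) (by omega)
      have hθ0 : 0 ≤ θ := le_trans (by linarith) hθ1
      set T := c (k+2) with hTdef
      have hcont : Continuous (fun s : ℝ =>
          (T + θ - s) * ((T + ((k:ℝ)+2)*θ) - s)^k / ((k+1).factorial : ℝ)) := by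
        fun_prop
      calc ∫⁻ s in Set.Icc 0 T, volume (box (k+1) fun j => c j - s)
          ≤ ∫⁻ s in Set.Icc 0 T, ENNReal.ofReal
              ((T + θ - s) * ((T + ((k:ℝ)+2)*θ) - s)^k / ((k+1).factorial : ℝ)) := by
            apply setLIntegral_mono (hcont.measurable.ennreal_ofReal)
            intro s hs
            obtain ⟨hs0, hsT⟩ := hs
            have hbound := ih (by omega) (fun j => c j - s)
              (fun i h1 h2 => by have := hdec i h1 (by omega); beta_reduce; linarith)
              (by beta_reduce; linarith)
              (fun i h1 h2 => by have := hθ i h1 (by omega); beta_reduce; linarith)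
            refine le_trans hbound (ENNReal.ofReal_le_ofReal ?_)
            have e1 : (0:ℝ) ≤ c (k+1) - s := by linarith
            have ekr : (0:ℝ) ≤ (k:ℝ) := Nat.cast_nonneg k
            have e2 : c (k+1) - s ≤ T + θ - s := by linarith
            have e3 : (0:ℝ) ≤ c (k+1) - s + ((k:ℝ)+1)*θ := by
              have h5 : (0:ℝ) ≤ ((k:ℝ)+1)*θ := by positivity
              linarith
            have e4 : c (k+1) - s + ((k:ℝ)+1)*θ ≤ (T + ((k:ℝ)+2)*θ) - s := by nlinarith
            have hfact : (0:ℝ) < ((k+1).factorial : ℝ) := by positivity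
            push_cast
            gcongr <;> linarith
        _ = ENNReal.ofReal (∫ s in Set.Icc 0 T,
              ((T + θ - s) * ((T + ((k:ℝ)+2)*θ) - s)^k / ((k+1).factorial : ℝ))) := by
            rw [← ofReal_integral_eq_lintegral_ofReal (hcont.integrableOn_Icc)]
            refine (ae_restrict_iff' measurableSet_Icc).2 (ae_of_all _ fun s hs => ?_)
            obtain ⟨hs0, hsT⟩ := hs
            have h1 : (0:ℝ) ≤ T + θ - s := by linarith
            have h2 : (0:ℝ) ≤ (T + ((k:ℝ)+2)*θ) - s := by
              have h3 : (0:ℝ) ≤ ((k:ℝ)+2)*θ := by positivity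
              linarith
            positivity
        _ ≤ ENNReal.ofReal (c (k+2) * (c (k+2) + (((k+2):ℕ):ℝ)*θ)^(k+2-1) / ((k+2).factorial : ℝ)) := by
            apply ENNReal.ofReal_le_ofReal
            rw [MeasureTheory.integral_Icc_eq_integral_Ioc,
              ← intervalIntegral.integral_of_le hT]
            rw [intervalIntegral.integral_div, integral_step T θ k]
            rw [Nat.factorial_succ (k+1)]
            have hk2 : ((k:ℝ)+2) ≠ 0 := by positivity
            have hf : (((k+1).factorial :ℝ)) ≠ 0 := by positivity
            apply le_of_eq
            push_cast
            rw [div_div]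
            norm_num
            congr 1
            ring


lemma tele (d : ℕ) (t : ℕ → ℝ) (θ : ℝ)
    (hθ : ∀ i, 1 ≤ i → i < d → t i - t (i + 1) ≤ θ) :
    ∀ m k, 1 ≤ k → k + m = d → t k ≤ t d + (m:ℝ) * θ := by
  intro m
  induction m with
  | zero => intro k hk hkd; rw [show k = d by omega]; simp
  | succ m ihm =>
    intro k hk hkd
    have h1 : t k ≤ t (k+1) + θ := by
      have := hθ k hk (by omega); linarith
    have h2 : t (k+1) ≤ t d + (m:ℝ)*θ := ihm (k+1) (by omega) (by omega)
    push_cast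
    linarith

theorem stmt_9 (d : ℕ) (hd : 1 ≤ d) (t : ℕ → ℝ) (θ : ℝ)
    (hdec : ∀ i, 1 ≤ i → i < d → t (i + 1) ≤ t i)
    (hnn : 0 ≤ t d)
    (hθ : ∀ i, 1 ≤ i → i < d → t i - t (i + 1) ≤ θ) :
    ({x : Fin d → ℝ | (∀ i, 0 ≤ x i) ∧
        ∀ j : Fin d, ∑ i ∈ Finset.univ.filter (fun i => j ≤ i), x i ≤ t ((j : ℕ) + 1)}
      ⊆ {x : Fin d → ℝ | (∀ i, 0 ≤ x i) ∧
        ∀ j : Fin d, ∑ i ∈ Finset.univ.filter (fun i => j ≤ i), x i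
          ≤ t d + ((d - 1 - (j : ℕ) : ℕ) : ℝ) * θ})
    ∧ (volume {x : Fin d → ℝ | (∀ i, 0 ≤ x i) ∧
        ∀ j : Fin d, ∑ i ∈ Finset.univ.filter (fun i => j ≤ i), x i ≤ t ((j : ℕ) + 1)}).toReal
      ≤ (1 / d.factorial : ℝ) * t d * (t d + d * θ) ^ (d - 1) := by
  have hθ0 : d = 1 ∨ 0 ≤ θ := by
    rcases Nat.lt_or_ge d 2 with h | h
    · left; omega
    · right
      have h1 := hdec 1 le_rfl (by omega)
      have h2 := hθ 1 le_rfl (by omega)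
      linarith
  constructor
  · rintro x ⟨hx0, hxc⟩
    refine ⟨hx0, fun j => ?_⟩
    refine le_trans (hxc j) ?_
    have hjd : (j:ℕ) < d := j.isLt
    have := tele d t θ hθ (d - 1 - (j:ℕ)) ((j:ℕ)+1) (by omega) (by omega)
    exact this
  · have hb : 0 ≤ t d * (t d + (d:ℝ) * θ) ^ (d - 1) / d.factorial := by
      rcases hθ0 with h | h
      · subst h; simpa using hnn
      · have : (0:ℝ) ≤ t d + (d:ℝ)*θ := by positivity
        positivity
    have hkey := key θ d hd t hdec hnn hθ
    have := ENNReal.toReal_le_of_le_ofReal hb hkey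
    calc (volume (box d t)).toReal
        ≤ t d * (t d + (d:ℝ) * θ) ^ (d - 1) / d.factorial := this
      _ = (1 / d.factorial : ℝ) * t d * (t d + d * θ) ^ (d - 1) := by ring
end

section
/- Let d ≥ 2 be an integer and ε_1 ≥ … ≥ ε_d ≥ 0 reals with ε_{d+1} = 0, and let V > 0 satisfy V ≤ d!·vol(□(ε_1,…,ε_d)), where □(t_1,…,t_d) = {x ∈ ℝ_{≥0}^d : ∑_{i=j}^d x_i ≤ t_j for all j}. Then max_{1≤i≤d}(ε_i − ε_{i+1}) ≥ ((d+1)V)^{1/d}/(d+1). -/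
open MeasureTheory Finset

-- FTC computation
lemma integral_aux (m : ℕ) (θ a : ℝ) :
    ∫ s in (0:ℝ)..a, (θ + a - s) * ((θ + a - s) + (m+1) * θ) ^ m / (m+1).factorial
      = a * (a + ((m+1) + 1) * θ) ^ (m+1) / ((m+1) + 1).factorial := by
  set c : ℝ := a + (m + 2) * θ with hc
  have key : ∀ s : ℝ, HasDerivAt
      (fun s : ℝ => -((c - s) ^ (m + 2) / (m + 2) - θ * (c - s) ^ (m + 1)) / (m+1).factorial)
      ((θ + a - s) * ((θ + a - s) + (m+1) * θ) ^ m / (m+1).factorial) s := by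
    intro s
    have h1 : HasDerivAt (fun s : ℝ => c - s) (-1) s := by
      simpa using (hasDerivAt_id s).const_sub c
    have h2 := (h1.pow (m + 2)).div_const ((m : ℝ) + 2)
    have h3 := (h1.pow (m + 1)).const_mul θ
    have h4 := ((h2.sub h3).neg).div_const ((m+1).factorial : ℝ)
    refine h4.congr_deriv ?_
    have hne : ((m : ℝ) + 2) ≠ 0 := by positivity
    have hv : (θ + a - s) + ((m:ℝ)+1) * θ = c - s := by rw [hc]; ring
    rw [hv]
    simp only [show m + 2 - 1 = m + 1 by omega, Nat.add_sub_cancel]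
    push_cast
    rw [hc]
    field_simp
    ring
  rw [intervalIntegral.integral_eq_sub_of_hasDerivAt (fun s _ => key s)]
  · have h0 : c - a = (m + 2) * θ := by rw [hc]; ring
    have h1 : c - 0 = c := by ring
    rw [h0, h1]
    have hfac : (((m + 2).factorial : ℝ)) = (m + 2) * (m+1).factorial := by
      rw [Nat.factorial_succ]; push_cast; ring
    have hfacne : ((m+1).factorial : ℝ) ≠ 0 := by positivity
    have : a + ((m : ℝ) + 1 + 1) * θ = c := by rw [hc]; ring
    rw [show ((m:ℝ)+1+1) = ((m:ℝ)+2) by ring] at *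
    rw [this, hfac]
    field_simp
    ring
  · apply Continuous.intervalIntegrable
    fun_prop


lemma core : ∀ d : ℕ, 1 ≤ d → ∀ θ a : ℝ, 0 ≤ θ → 0 ≤ a →
    ∀ t : Fin d → ℝ, (∀ j : Fin d, t j ≤ ((d : ℝ) - 1 - j) * θ + a) →
    volume {x : Fin d → ℝ | (∀ i, 0 ≤ x i) ∧
      ∀ j : Fin d, ∑ i ∈ Finset.univ.filter (fun i => j ≤ i), x i ≤ t j}
      ≤ ENNReal.ofReal (a * (a + d * θ) ^ (d - 1) / d.factorial) := by
  intro d hd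
  induction d, hd using Nat.le_induction with
  | base =>
    intro θ a hθ ha t ht
    have hsum : ∀ x : Fin 1 → ℝ, ∑ i ∈ Finset.univ.filter (fun i => (0 : Fin 1) ≤ i), x i = x 0 := by
      intro x
      have : Finset.univ.filter (fun i => (0 : Fin 1) ≤ i) = {(0 : Fin 1)} := by decide
      rw [this, Finset.sum_singleton]
    have hsub : {x : Fin 1 → ℝ | (∀ i, 0 ≤ x i) ∧
        ∀ j : Fin 1, ∑ i ∈ Finset.univ.filter (fun i => j ≤ i), x i ≤ t j}
        ⊆ (MeasurableEquiv.funUnique (Fin 1) ℝ) ⁻¹' (Set.Icc 0 (t 0)) := by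
      intro x hx
      have h1 := hx.1 0
      have h2 := hx.2 0
      rw [hsum] at h2
      simp only [Set.mem_preimage, MeasurableEquiv.funUnique_apply, Set.mem_Icc]
      exact ⟨h1, h2⟩
    refine le_trans (measure_mono hsub) ?_
    refine le_trans (le_of_eq ((volume_preserving_funUnique (Fin 1) ℝ).measure_preimage_equiv
      (Set.Icc 0 (t 0)))) ?_
    rw [Real.volume_Icc]
    apply ENNReal.ofReal_le_ofReal
    have := ht 0
    simp only [Fin.val_zero, Nat.cast_one, Nat.cast_zero] at this ⊢
    simp only [Nat.factorial_one, Nat.cast_one, pow_zero]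
    push_cast at this ⊢
    nlinarith
  | succ d hd IH =>
    intro θ a hθ ha t ht
    push_cast at ht ⊢
    set e := MeasurableEquiv.piFinSuccAbove (fun _ : Fin (d+1) => ℝ) (Fin.last d) with he
    set T : Set (ℝ × (Fin d → ℝ)) := {p | (0 ≤ p.1 ∧ ∀ i, 0 ≤ p.2 i) ∧ p.1 ≤ t (Fin.last d) ∧
        ∀ k : Fin d, (∑ i ∈ Finset.univ.filter (fun i => k ≤ i), p.2 i) ≤ t k.castSucc - p.1}
      with hT_def
    -- sum lemmas
    have L1 : ∀ x : Fin (d+1) → ℝ,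
        ∑ i ∈ Finset.univ.filter (fun i => Fin.last d ≤ i), x i = x (Fin.last d) := by
      intro x
      have : Finset.univ.filter (fun i => Fin.last d ≤ i) = {Fin.last d} := by
        ext i
        simp [Fin.last_le_iff, eq_comm]
      rw [this, Finset.sum_singleton]
    have L2 : ∀ (x : Fin (d+1) → ℝ) (k : Fin d),
        ∑ i ∈ Finset.univ.filter (fun i => k.castSucc ≤ i), x i
          = (∑ i ∈ Finset.univ.filter (fun i => k ≤ i), x i.castSucc) + x (Fin.last d) := by
      intro x k
      rw [Finset.sum_filter, Finset.sum_filter, Fin.sum_univ_castSucc]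
      simp [Fin.castSucc_le_castSucc_iff, Fin.le_last]
    -- the set equality
    have hST : {x : Fin (d+1) → ℝ | (∀ i, 0 ≤ x i) ∧
        ∀ j : Fin (d+1), ∑ i ∈ Finset.univ.filter (fun i => j ≤ i), x i ≤ t j} = e ⁻¹' T := by
      ext x
      simp only [Set.mem_setOf_eq, Set.mem_preimage, hT_def, he,
        MeasurableEquiv.piFinSuccAbove]
      show _ ↔ ((0 ≤ x (Fin.last d) ∧ ∀ i, 0 ≤ x ((Fin.last d).succAbove i)) ∧ _ ∧
        ∀ k : Fin d, (∑ i ∈ Finset.univ.filter (fun i => k ≤ i), x ((Fin.last d).succAbove i))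
          ≤ t k.castSucc - x (Fin.last d))
      simp only [Fin.succAbove_last]
      constructor
      · rintro ⟨h1, h2⟩
        refine ⟨⟨h1 _, fun i => h1 _⟩, ?_, fun k => ?_⟩
        · have := h2 (Fin.last d); rwa [L1] at this
        · have := h2 k.castSucc; rw [L2] at this; linarith
      · rintro ⟨⟨h1, h2⟩, h3, h4⟩
        constructor
        · intro i
          induction i using Fin.lastCases with
          | last => exact h1
          | cast i => exact h2 i
        · intro j
          induction j using Fin.lastCases with
          | last => rw [L1]; exact h3
          | cast k =>
            rw [L2]
            have := h4 k; linarith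
    have hT : MeasurableSet T := by
      have h1 : MeasurableSet {p : ℝ × (Fin d → ℝ) | 0 ≤ p.1} :=
        measurableSet_le measurable_const measurable_fst
      have h2 : MeasurableSet {p : ℝ × (Fin d → ℝ) | ∀ i, 0 ≤ p.2 i} := by
        rw [Set.setOf_forall]
        exact MeasurableSet.iInter fun i =>
          measurableSet_le measurable_const (by fun_prop)
      have h3 : MeasurableSet {p : ℝ × (Fin d → ℝ) | p.1 ≤ t (Fin.last d)} :=
        measurableSet_le measurable_fst measurable_const
      have h4 : MeasurableSet {p : ℝ × (Fin d → ℝ) |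
          ∀ k : Fin d, (∑ i ∈ Finset.univ.filter (fun i => k ≤ i), p.2 i) ≤ t k.castSucc - p.1} := by
        rw [Set.setOf_forall]
        exact MeasurableSet.iInter fun k => measurableSet_le
          (by fun_prop) (by fun_prop)
      exact (h1.inter h2).inter (h3.inter h4)
    rw [hST, (volume_preserving_piFinSuccAbove (fun _ : Fin (d+1) => ℝ) (Fin.last d)).measure_preimage
      hT.nullMeasurableSet]
    rw [show (volume : Measure (ℝ × (Fin d → ℝ))) = (volume : Measure ℝ).prod volume from rfl]
    rw [Measure.prod_apply hT]
    set g : ℝ → ℝ := fun s => (θ + a - s) * ((θ + a - s) + d * θ) ^ (d-1) / d.factorial with hg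
    have hta : t (Fin.last d) ≤ a := by
      have h := ht (Fin.last d)
      have h2 : (((Fin.last d : Fin (d+1)) : ℕ) : ℝ) = (d : ℝ) := by
        rw [Fin.val_last]
      rw [h2] at h
      nlinarith [hθ]
    have hslice : ∀ s : ℝ, volume (Prod.mk s ⁻¹' T)
        ≤ Set.indicator (Set.Icc 0 a) (fun s => ENNReal.ofReal (g s)) s := by
      intro s
      by_cases hs : s ∈ Set.Icc 0 a
      · rw [Set.indicator_of_mem hs]
        by_cases hs2 : s ≤ t (Fin.last d)
        · have hset : Prod.mk s ⁻¹' T = {y : Fin d → ℝ | (∀ i, 0 ≤ y i) ∧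
              ∀ k : Fin d, ∑ i ∈ Finset.univ.filter (fun i => k ≤ i), y i ≤ t k.castSucc - s} := by
            ext y
            simp only [Set.mem_preimage, hT_def, Set.mem_setOf_eq]
            constructor
            · rintro ⟨⟨_, h2⟩, _, h4⟩; exact ⟨h2, h4⟩
            · rintro ⟨h2, h4⟩; exact ⟨⟨hs.1, h2⟩, hs2, h4⟩
          rw [hset]
          have ha' : 0 ≤ θ + a - s := by
            rcases hs with ⟨_, h⟩; linarith
          refine le_trans (IH θ (θ + a - s) hθ ha' (fun k => t k.castSucc - s) ?_) (le_of_eq rfl)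
          intro k
          have h := ht k.castSucc
          have hk : (((k.castSucc : Fin (d+1)) : ℕ) : ℝ) = ((k : ℕ) : ℝ) := by
            rw [Fin.coe_castSucc]
          rw [hk] at h
          linarith
        · have hempty : Prod.mk s ⁻¹' T = ∅ := by
            ext y
            simp only [Set.mem_preimage, hT_def, Set.mem_setOf_eq, Set.mem_empty_iff_false,
              iff_false]
            rintro ⟨_, h3, _⟩
            exact hs2 h3
          rw [hempty]
          simp
      · rw [Set.indicator_of_notMem hs]
        have hempty : Prod.mk s ⁻¹' T = ∅ := by
          ext y
          simp only [Set.mem_preimage, hT_def, Set.mem_setOf_eq, Set.mem_empty_iff_false,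
            iff_false]
          rintro ⟨⟨h1, _⟩, h3, _⟩
          rw [Set.mem_Icc] at hs
          push_neg at hs
          exact absurd (hs h1) (by linarith)
        rw [hempty]
        simp
    refine le_trans (lintegral_mono hslice) ?_
    rw [lintegral_indicator measurableSet_Icc]
    have hcont : Continuous g := by fun_prop
    have hnn : 0 ≤ᵐ[volume.restrict (Set.Icc 0 a)] g := by
      apply (ae_restrict_iff' measurableSet_Icc).2
      filter_upwards with s hs
      rcases hs with ⟨hs1, hs2⟩
      have h1 : 0 ≤ θ + a - s := by linarith
      have h2 : 0 ≤ (θ + a - s) + d * θ := by positivity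
      rw [hg]
      have : (0:ℝ) ≤ (d.factorial : ℝ) := by positivity
      positivity
    rw [← ofReal_integral_eq_lintegral_ofReal (hcont.integrableOn_Icc) hnn]
    apply ENNReal.ofReal_le_ofReal
    rw [MeasureTheory.integral_Icc_eq_integral_Ioc, ← intervalIntegral.integral_of_le ha]
    obtain ⟨m, rfl⟩ : ∃ m, d = m + 1 := ⟨d - 1, (Nat.succ_pred_eq_of_pos hd).symm⟩
    have := integral_aux m θ a
    apply le_of_eq
    rw [hg]
    push_cast at this ⊢
    simp only [Nat.add_sub_cancel] at *
    convert this using 2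

theorem stmt_11 (d : ℕ) (hd : 2 ≤ d) (ε : ℕ → ℝ)
    (hdec : ∀ i, 1 ≤ i → i < d → ε (i + 1) ≤ ε i)
    (hnn : 0 ≤ ε d) (hlast : ε (d + 1) = 0)
    (V : ℝ) (hV : 0 < V)
    (hvol : V ≤ (d.factorial : ℝ) *
      (volume {x : Fin d → ℝ | (∀ i, 0 ≤ x i) ∧
        ∀ j : Fin d, ∑ i ∈ Finset.univ.filter (fun i => j ≤ i), x i ≤ ε ((j : ℕ) + 1)}).toReal) :
    (⨆ i ∈ Finset.Icc 1 d, (ε i - ε (i + 1)))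
      ≥ (((d : ℝ) + 1) * V) ^ ((1 : ℝ) / d) / ((d : ℝ) + 1) := by
  set θ : ℝ := ⨆ i ∈ Finset.Icc 1 d, (ε i - ε (i + 1)) with hθdef
  have hne : (d : ℕ) ∈ Finset.Icc 1 d := by simp; omega
  have hbdd : BddAbove (Set.range fun i => ⨆ _ : i ∈ Finset.Icc 1 d, (ε i - ε (i + 1))) := by
    refine ⟨max ((Finset.Icc 1 d).sup' ⟨d, hne⟩ fun i => ε i - ε (i + 1)) 0, ?_⟩
    rintro _ ⟨i, rfl⟩
    dsimp only
    by_cases h : i ∈ Finset.Icc 1 d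
    · rw [ciSup_pos h]
      exact le_max_of_le_left (Finset.le_sup' (fun i => ε i - ε (i + 1)) h)
    · haveI : IsEmpty (i ∈ Finset.Icc 1 d) := ⟨h⟩
      rw [Real.iSup_of_isEmpty]
      exact le_max_right _ _
  have hθi : ∀ i ∈ Finset.Icc 1 d, ε i - ε (i + 1) ≤ θ := by
    intro i h
    rw [hθdef]
    have := le_ciSup hbdd i
    rwa [ciSup_pos h] at this
  have hθ0 : 0 ≤ θ := by
    have := hθi d hne
    rw [hlast] at this
    linarith
  have hε : ∀ m, m ≤ d → ε (d + 1 - m) ≤ m * θ := by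
    intro m
    induction m with
    | zero => intro _; simp [hlast]
    | succ m IHm =>
      intro hm
      have h1 : d + 1 - (m + 1) = d - m := by omega
      have h2 : d - m + 1 = d + 1 - m := by omega
      have h3 : d - m ∈ Finset.Icc 1 d := by simp; omega
      have h4 := hθi _ h3
      have h5 := IHm (by omega)
      rw [h1]
      rw [h2] at h4
      push_cast
      linarith
  have hcore := core d (by omega) θ θ hθ0 hθ0 (fun j => ε ((j : ℕ) + 1)) ?_
  swap
  · intro j
    have hjd : (j : ℕ) ≤ d := le_of_lt j.isLt
    have h1 : d + 1 - (d - (j : ℕ)) = (j : ℕ) + 1 := by omega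
    have h2 := hε (d - (j : ℕ)) (by omega)
    rw [h1] at h2
    have h3 : ((d - (j : ℕ) : ℕ) : ℝ) = (d : ℝ) - (j : ℕ) := by
      push_cast [Nat.cast_sub hjd]; ring
    rw [h3] at h2
    nlinarith [hθ0]
  have hB : (0:ℝ) ≤ θ * (θ + d * θ) ^ (d - 1) / d.factorial := by positivity
  have h1 : (volume {x : Fin d → ℝ | (∀ i, 0 ≤ x i) ∧
      ∀ j : Fin d, ∑ i ∈ Finset.univ.filter (fun i => j ≤ i), x i ≤ ε ((j : ℕ) + 1)}).toReal
      ≤ θ * (θ + d * θ) ^ (d - 1) / d.factorial :=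
    ENNReal.toReal_le_of_le_ofReal hB hcore
  have hfacpos : (0:ℝ) < d.factorial := by positivity
  have h2 : V ≤ θ * (θ + d * θ) ^ (d - 1) := by
    calc V ≤ (d.factorial : ℝ) * _ := hvol
      _ ≤ (d.factorial : ℝ) * (θ * (θ + d * θ) ^ (d - 1) / d.factorial) := by
          apply mul_le_mul_of_nonneg_left h1 (le_of_lt hfacpos)
      _ = θ * (θ + d * θ) ^ (d - 1) := by field_simp
  have h3 : ((d:ℝ) + 1) * V ≤ (((d:ℝ) + 1) * θ) ^ d := by
    have he : ((d:ℝ) + 1) * θ * (((d:ℝ) + 1) * θ) ^ (d - 1) = (((d:ℝ) + 1) * θ) ^ d := by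
      rw [← pow_succ']
      congr 1
      omega
    have : θ + (d:ℝ) * θ = ((d:ℝ) + 1) * θ := by ring
    rw [this] at h2
    nlinarith [pow_nonneg (by positivity : (0:ℝ) ≤ ((d:ℝ)+1)*θ) (d-1)]
  have hd0 : (d : ℝ) ≠ 0 := by positivity
  have h4 : (((d:ℝ) + 1) * V) ^ ((1:ℝ)/d) ≤ ((d:ℝ) + 1) * θ := by
    calc (((d:ℝ) + 1) * V) ^ ((1:ℝ)/d)
        ≤ ((((d:ℝ) + 1) * θ) ^ (d:ℕ)) ^ ((1:ℝ)/d) := by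
          apply Real.rpow_le_rpow (by positivity) h3 (by positivity)
      _ = ((d:ℝ) + 1) * θ := by
          rw [← Real.rpow_natCast (((d:ℝ) + 1) * θ) d, ← Real.rpow_mul (by positivity),
            mul_one_div_cancel hd0, Real.rpow_one]
  rw [ge_iff_le, div_le_iff₀ (by positivity)]
  calc (((d:ℝ) + 1) * V) ^ ((1:ℝ)/d) ≤ ((d:ℝ) + 1) * θ := h4
    _ = θ * ((d:ℝ) + 1) := by ring
end
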